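/- arXiv:1509.02119 — 2 statements merged into one kernel-verified Lean document; each statement's English description precedes it below -/
import Mathlib

section
/- For every δ ∈ (0,1], σ ∈ (0,1], n ≥ 1 and ω ∈ ℝⁿ, the sum over k ∈ ℤⁿ of (1 + |ω|·|k|)·e^{-δ|k|σ} is at most (1 + |ω|)·(e/(δσ))^{2n}. -/
set_option maxHeartbeats 1000000

lemma one_add_sum_le_prod_one_add {n : ℕ} (g : Fin n → ℝ) (hg : ∀ l, 0 ≤ g l) :
    1 + ∑ l, g l ≤ ∏ l, (1 + g l) := by
  induction n with
  | zero => simp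
  | succ n ih =>
    rw [Fin.sum_univ_succ, Fin.prod_univ_succ]
    have h1 := ih (fun l => g l.succ) (fun l => hg _)
    have h2 : 0 ≤ ∑ l, g (Fin.succ l) := Finset.sum_nonneg fun l _ => hg _
    nlinarith [hg 0]

lemma tsum_pi_prod (f : ℤ → ℝ) (hf : Summable f) (h0 : ∀ m, 0 ≤ f m) (n : ℕ) :
    Summable (fun k : Fin n → ℤ => ∏ l, f (k l)) ∧
      ∑' k : Fin n → ℤ, ∏ l, f (k l) = (∑' m, f m) ^ n := by
  induction n with
  | zero =>
    refine ⟨Summable.of_finite, ?_⟩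
    rw [tsum_eq_single (fun _ => 0) (fun b hb => absurd (Subsingleton.elim b _) hb)]
    simp
  | succ n ih =>
    obtain ⟨ihs, ihe⟩ := ih
    set e : ℤ × (Fin n → ℤ) ≃ (Fin (n+1) → ℤ) := Fin.consEquiv (fun _ => ℤ) with he
    have key : ∀ p : ℤ × (Fin n → ℤ), ∏ l, f ((e p) l) = f p.1 * ∏ l, f (p.2 l) := by
      intro p
      rw [Fin.prod_univ_succ]
      simp [he, Fin.consEquiv]
    have hprodnn : ∀ k : Fin n → ℤ, 0 ≤ ∏ l, f (k l) :=
      fun k => Finset.prod_nonneg fun l _ => h0 _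
    have hsum : Summable (fun p : ℤ × (Fin n → ℤ) => f p.1 * ∏ l, f (p.2 l)) := by
      apply hf.mul_of_nonneg ihs (Pi.le_def.mpr h0) (Pi.le_def.mpr hprodnn)
    have hsum' : Summable (fun p : ℤ × (Fin n → ℤ) => ∏ l, f ((e p) l)) :=
      hsum.congr fun p => (key p).symm
    refine ⟨e.summable_iff.mp hsum', ?_⟩
    rw [← e.tsum_eq, tsum_congr key, ← Summable.tsum_mul_tsum hf ihs hsum, ihe, pow_succ]
    ring

theorem weighted_lattice_sum_bound (n : ℕ) (hn : 1 ≤ n) (δ σ : ℝ)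
    (hδ : δ ∈ Set.Ioc (0:ℝ) 1) (hσ : σ ∈ Set.Ioc (0:ℝ) 1)
    (ω : EuclideanSpace ℝ (Fin n)) :
    ∑' k : Fin n → ℤ,
        (1 + ‖ω‖ * (∑ l, |((k l : ℝ))|)) * Real.exp (-(δ * (∑ l, |((k l : ℝ))|) * σ))
      ≤ (1 + ‖ω‖) * (Real.exp 1 / (δ * σ)) ^ (2 * n) := by
  obtain ⟨hδ0, hδ1⟩ := hδ
  obtain ⟨hσ0, hσ1⟩ := hσ
  set a : ℝ := δ * σ with ha
  have ha0 : 0 < a := mul_pos hδ0 hσ0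
  have ha1 : a ≤ 1 := by nlinarith
  set r : ℝ := Real.exp (-a) with hr
  have hr0 : 0 < r := Real.exp_pos _
  have hr1 : r < 1 := Real.exp_lt_one_iff.mpr (by linarith)
  have h1r : 0 < 1 - r := by linarith
  set f : ℤ → ℝ := fun m => (1 + |(m:ℝ)|) * Real.exp (-(a * |(m:ℝ)|)) with hfdef
  have h0 : ∀ m, 0 ≤ f m := fun m => by positivity
  set g : ℕ → ℝ := fun j => (1 + (j:ℝ)) * r ^ j with hgdef
  have hg_sum : Summable g := by
    have h1 : Summable (fun j : ℕ => r ^ j) := summable_geometric_of_lt_one hr0.le hr1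
    have h2 : Summable (fun j : ℕ => (j:ℝ) * r ^ j) := by
      simpa using summable_pow_mul_geometric_of_norm_lt_one 1
        (r := r) (by rwa [Real.norm_eq_abs, abs_of_pos hr0])
    exact (h1.add h2).congr fun j => by simp [hgdef]; ring
  have hfg_nat : ∀ j : ℕ, f (j : ℤ) = g j := by
    intro j
    have hj : |((j:ℤ):ℝ)| = (j:ℝ) := by
      push_cast; exact abs_of_nonneg (Nat.cast_nonneg j)
    simp only [hfdef, hgdef, hj]
    rw [show -(a * (j:ℝ)) = (j:ℝ) * (-a) by ring, Real.exp_nat_mul]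
  have hfneg : ∀ m : ℤ, f (-m) = f m := by
    intro m
    simp [hfdef]
  have hf_nat_sum : Summable (fun j : ℕ => f (j : ℤ)) :=
    hg_sum.congr fun j => (hfg_nat j).symm
  have hf_neg_sum : Summable (fun j : ℕ => f (-((j : ℤ) + 1))) := by
    have h1 : Summable (fun j : ℕ => g (j + 1)) := (summable_nat_add_iff 1).2 hg_sum
    refine h1.congr fun j => ?_
    rw [show -((j:ℤ)+1) = -(((j+1:ℕ):ℤ)) by push_cast; ring, hfneg, hfg_nat]
  have hf_sum : Summable f := by
    apply Summable.of_nat_of_neg hf_nat_sum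
    refine (hf_nat_sum.congr fun j => ?_)
    rw [hfneg]
  have hG : ∑' j, g j = 1 / (1 - r) ^ 2 := by
    have h1 : Summable (fun j : ℕ => r ^ j) := summable_geometric_of_lt_one hr0.le hr1
    have h2 : Summable (fun j : ℕ => (j:ℝ) * r ^ j) := by
      simpa using summable_pow_mul_geometric_of_norm_lt_one 1
        (r := r) (by rwa [Real.norm_eq_abs, abs_of_pos hr0])
    have : ∑' j, g j = (∑' j : ℕ, r ^ j) + ∑' j : ℕ, (j:ℝ) * r ^ j := by
      rw [← Summable.tsum_add h1 h2]
      exact tsum_congr fun j => by simp [hgdef]; ring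
    rw [this, tsum_geometric_of_lt_one hr0.le hr1,
      tsum_coe_mul_geometric_of_norm_lt_one (by rwa [Real.norm_eq_abs, abs_of_pos hr0])]
    field_simp
    ring
  have hT : ∑' m : ℤ, f m ≤ 2 / (1 - r) ^ 2 := by
    rw [tsum_of_nat_of_neg_add_one hf_nat_sum hf_neg_sum]
    have e1 : ∑' j : ℕ, f (j : ℤ) = 1 / (1 - r) ^ 2 := by
      rw [tsum_congr hfg_nat, hG]
    have e2 : ∑' j : ℕ, f (-((j : ℤ) + 1)) = 1 / (1 - r) ^ 2 - 1 := by
      have h3 : ∑' j : ℕ, f (-((j : ℤ) + 1)) = ∑' j : ℕ, g (j + 1) := by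
        refine tsum_congr fun j => ?_
        rw [show -((j:ℤ)+1) = -(((j+1:ℕ):ℤ)) by push_cast; ring, hfneg, hfg_nat]
      have h4 : ∑' j, g j = g 0 + ∑' j : ℕ, g (j + 1) := Summable.tsum_eq_zero_add hg_sum
      have hg0 : g 0 = 1 := by simp [hgdef]
      rw [h3]
      rw [hG, hg0] at h4
      linarith
    rw [e1, e2]
    have : 2 / (1 - r) ^ 2 = 2 * (1 / (1 - r) ^ 2) := by ring
    linarith
  have hkey : 2 / (1 - r) ^ 2 ≤ (Real.exp 1 / a) ^ 2 := by
    have hc : a * (1 - Real.exp (-1)) ≤ 1 - r := by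
      have hcx := convexOn_exp.2 (Set.mem_univ (-1:ℝ)) (Set.mem_univ (0:ℝ))
        ha0.le (by linarith : (0:ℝ) ≤ 1 - a) (by ring)
      simp only [smul_eq_mul, mul_neg, mul_one, mul_zero, add_zero, Real.exp_zero] at hcx
      have : r = Real.exp (-a) := hr
      nlinarith [hcx]
    have hE : (2.7182818283 : ℝ) < Real.exp 1 := Real.exp_one_gt_d9
    have hEinv : Real.exp (-1) = (Real.exp 1)⁻¹ := Real.exp_neg 1
    have hE0 : (0:ℝ) < Real.exp 1 := Real.exp_pos 1
    have hEc : a * (Real.exp 1 - 1) ≤ Real.exp 1 * (1 - r) := by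
      have h5 := mul_le_mul_of_nonneg_left hc hE0.le
      calc a * (Real.exp 1 - 1)
          = Real.exp 1 * (a * (1 - (Real.exp 1)⁻¹)) := by field_simp
        _ = Real.exp 1 * (a * (1 - Real.exp (-1))) := by rw [hEinv]
        _ ≤ Real.exp 1 * (1 - r) := h5
    have hEc0 : 0 ≤ a * (Real.exp 1 - 1) := by nlinarith
    have hsq : (a * (Real.exp 1 - 1)) ^ 2 ≤ (Real.exp 1 * (1 - r)) ^ 2 :=
      pow_le_pow_left₀ hEc0 hEc 2
    have h6 : (2:ℝ) ≤ (Real.exp 1 - 1) ^ 2 := by nlinarith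
    have h7 : 2 * a ^ 2 ≤ (a * (Real.exp 1 - 1)) ^ 2 := by
      nlinarith [mul_nonneg (sq_nonneg a) (by linarith : (0:ℝ) ≤ (Real.exp 1 - 1) ^ 2 - 2)]
    rw [div_pow, div_le_div_iff₀ (by positivity) (by positivity)]
    nlinarith [hsq, h7]
  obtain ⟨hPs, hPe⟩ := tsum_pi_prod f hf_sum h0 n
  have hbound : ∀ k : Fin n → ℤ,
      (1 + ‖ω‖ * (∑ l, |((k l : ℝ))|)) * Real.exp (-(δ * (∑ l, |((k l : ℝ))|) * σ))
        ≤ (1 + ‖ω‖) * ∏ l, f (k l) := by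
    intro k
    set S : ℝ := ∑ l, |((k l : ℝ))| with hS
    have hS0 : 0 ≤ S := Finset.sum_nonneg fun l _ => abs_nonneg _
    have hexp : Real.exp (-(δ * S * σ)) = ∏ l, Real.exp (-(a * |((k l : ℝ))|)) := by
      rw [← Real.exp_sum]
      congr 1
      rw [Finset.sum_neg_distrib, ← Finset.mul_sum, ← hS]
      ring
    have hsplit : ∏ l, f (k l)
        = (∏ l, (1 + |((k l : ℝ))|)) * Real.exp (-(δ * S * σ)) := by
      rw [hexp, ← Finset.prod_mul_distrib]
    have hprod : (1 + S) ≤ ∏ l, (1 + |((k l : ℝ))|) :=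
      one_add_sum_le_prod_one_add _ (fun l => abs_nonneg _)
    have hω : 0 ≤ ‖ω‖ := norm_nonneg ω
    have hA : 1 + ‖ω‖ * S ≤ (1 + ‖ω‖) * ∏ l, (1 + |((k l : ℝ))|) := by
      have h1 : 1 + ‖ω‖ * S ≤ (1 + ‖ω‖) * (1 + S) := by nlinarith
      have h2 : (1 + ‖ω‖) * (1 + S) ≤ (1 + ‖ω‖) * ∏ l, (1 + |((k l : ℝ))|) :=
        mul_le_mul_of_nonneg_left hprod (by linarith)
      linarith
    rw [hsplit, ← mul_assoc]
    exact mul_le_mul_of_nonneg_right hA (Real.exp_pos _).le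
  have hRs : Summable (fun k : Fin n → ℤ => (1 + ‖ω‖) * ∏ l, f (k l)) := hPs.mul_left _
  have hLs : Summable (fun k : Fin n → ℤ =>
      (1 + ‖ω‖ * (∑ l, |((k l : ℝ))|)) * Real.exp (-(δ * (∑ l, |((k l : ℝ))|) * σ))) := by
    apply Summable.of_nonneg_of_le _ hbound hRs
    intro k
    have : (0:ℝ) ≤ ∑ l, |((k l : ℝ))| := Finset.sum_nonneg fun l _ => abs_nonneg _
    positivity
  have hTnn : 0 ≤ ∑' m : ℤ, f m := tsum_nonneg h0
  calc ∑' k : Fin n → ℤ,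
        (1 + ‖ω‖ * (∑ l, |((k l : ℝ))|)) * Real.exp (-(δ * (∑ l, |((k l : ℝ))|) * σ))
      ≤ ∑' k : Fin n → ℤ, (1 + ‖ω‖) * ∏ l, f (k l) := Summable.tsum_le_tsum hbound hLs hRs
    _ = (1 + ‖ω‖) * (∑' m : ℤ, f m) ^ n := by rw [tsum_mul_left, hPe]
    _ ≤ (1 + ‖ω‖) * ((Real.exp 1 / a) ^ 2) ^ n := by
        have hle : ∑' m : ℤ, f m ≤ (Real.exp 1 / a) ^ 2 := hT.trans hkey
        have := pow_le_pow_left₀ hTnn hle n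
        have hω : 0 ≤ ‖ω‖ := norm_nonneg ω
        nlinarith [this, pow_nonneg hTnn n]
    _ = (1 + ‖ω‖) * (Real.exp 1 / (δ * σ)) ^ (2 * n) := by
        rw [← pow_mul, ← ha]
end

section
/- Let Γ > 0, γ₀ > 0, τ > 0, and define (γ_l)_{l≥0} by γ_l = Γ·Σ_{j=1}^{l} τ^{j-1} γ_{l-j} for l ≥ 1. Set Δ := τ + Γ. Then γ_l = γ₀·Γ·Δ^{l-1} for all l ≥ 1. -/
theorem linear_recurrence_geometric' (Γ γ₀ τ : ℝ) (γ : ℕ → ℝ)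
    (hΓ : 0 < Γ) (hτ : 0 < τ) (hγ₀ : 0 < γ₀) (hγ0 : γ 0 = γ₀)
    (hrec : ∀ l : ℕ, 1 ≤ l →
      γ l = Γ * ∑ j ∈ Finset.Icc 1 l, τ ^ (j - 1) * γ (l - j)) :
    ∀ l : ℕ, 1 ≤ l → γ l = γ₀ * Γ * (τ + Γ) ^ (l - 1) := by
  have hS : ∀ l : ℕ, (∑ j ∈ Finset.Icc 1 l, τ ^ (j - 1) * γ (l - j))
      = ∑ i ∈ Finset.range l, τ ^ i * γ (l - 1 - i) := by
    intro l
    refine Finset.sum_nbij' (fun j => j - 1) (fun i => i + 1) ?_ ?_ ?_ ?_ ?_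
    · intro a ha
      simp only [Finset.mem_Icc] at ha
      simp only [Finset.mem_range]
      omega
    · intro a ha
      simp only [Finset.mem_range] at ha
      simp only [Finset.mem_Icc]
      omega
    · intro a ha
      simp only [Finset.mem_Icc] at ha
      omega
    · intro a ha
      omega
    · intro a ha
      simp only [Finset.mem_Icc] at ha
      congr 2
      omega
  intro l hl
  induction l, hl using Nat.le_induction with
  | base =>
      rw [hrec 1 le_rfl, hS]
      simp [hγ0]
      ring
  | succ l hl ih =>
      have key : γ (l + 1) = (τ + Γ) * γ l := by
        rw [hrec (l + 1) (by omega), hS, Finset.sum_range_succ']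
        have hrw : ∀ i ∈ Finset.range l,
            τ ^ (i + 1) * γ (l + 1 - 1 - (i + 1)) = τ * (τ ^ i * γ (l - 1 - i)) := by
          intro i _
          have : l + 1 - 1 - (i + 1) = l - 1 - i := by omega
          rw [this, pow_succ]
          ring
        rw [Finset.sum_congr rfl hrw, ← Finset.mul_sum, ← hS]
        have hsub : l + 1 - 1 - 0 = l := rfl
        rw [hsub, pow_zero, one_mul, mul_add, ← mul_assoc, mul_comm Γ τ, mul_assoc,
          ← hrec l hl]
        ring
      rw [key, ih]
      have h1 : l + 1 - 1 = l := by omega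
      have h2 : (τ + Γ) ^ l = (τ + Γ) * (τ + Γ) ^ (l - 1) := by
        conv_lhs => rw [show l = (l - 1) + 1 by omega]
        rw [pow_succ]
        ring
      rw [h1, h2]
      ring
end
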